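/- In a d-dimensional grid graph, let u be a vertex and v, v' two distinct neighbors of u that are not opposed (i.e., there is no dimension i with |v_i − v'_i| = 2 and v_j = v'_j for all j ≠ i). Then there exists exactly one vertex x ≠ u with N(u) ∩ N(x) = {v, v'}. -/

import Mathlib

/-- The `d`-dimensional grid graph on `∀ i, Fin (n i)`: two vertices are adjacent
iff they differ by exactly 1 in exactly one coordinate. -/
def gridGraphD (d : ℕ) (n : Fin d → ℕ) : SimpleGraph (∀ i : Fin d, Fin (n i)) where
  Adj u v := ∃ i, |(u i : ℤ) - (v i : ℤ)| = 1 ∧ ∀ j, j ≠ i → u j = v j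
  symm := by
    constructor
    rintro u v ⟨i, h1, h2⟩
    exact ⟨i, by rwa [abs_sub_comm], fun j hj => (h2 j hj).symm⟩
  loopless := by constructor; rintro u ⟨i, h1, -⟩; simp at h1


/-- Two vertices of the grid graph are opposed if they differ by exactly 2 in one
coordinate and agree in all others. -/
def Opposed {d : ℕ} {n : Fin d → ℕ} (v v' : ∀ i : Fin d, Fin (n i)) : Prop :=
  ∃ i, |(v i : ℤ) - (v' i : ℤ)| = 2 ∧ ∀ j, j ≠ i → v j = v' j

theorem stmt17 (d : ℕ) (n : Fin d → ℕ) (u v v' : ∀ i : Fin d, Fin (n i))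
    (hv : (gridGraphD d n).Adj u v) (hv' : (gridGraphD d n).Adj u v') (hne : v ≠ v')
    (hop : ¬ Opposed v v') :
    ∃! x, x ≠ u ∧
      (gridGraphD d n).neighborSet u ∩ (gridGraphD d n).neighborSet x = {v, v'} := by
  classical
  obtain ⟨i, hi1, hi2⟩ := id hv
  obtain ⟨i', hi'1, hi'2⟩ := id hv'
  -- the two coordinates are distinct
  have hii' : i ≠ i' := by
    rintro rfl
    apply hop
    refine ⟨i, ?_, fun j hj => (hi2 j hj).symm.trans (hi'2 j hj)⟩
    have hvv : (v i : ℤ) ≠ (v' i : ℤ) := by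
      intro h
      apply hne
      funext j
      by_cases hji : j = i
      · subst hji; exact Fin.ext (by exact_mod_cast h)
      · exact ((hi2 j hji).symm.trans (hi'2 j hji))
    rw [abs_eq (by norm_num : (0:ℤ) ≤ 1)] at hi1 hi'1
    rw [abs_eq (by norm_num : (0:ℤ) ≤ 2)]
    omega
  have hvine : (u i : ℤ) ≠ (v i : ℤ) := by
    intro h; rw [h] at hi1; simp at hi1
  have hv'ine : (u i' : ℤ) ≠ (v' i' : ℤ) := by
    intro h; rw [h] at hi'1; simp at hi'1
  have huine' : v i ≠ u i := fun h => hvine (by rw [h])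
  have huv'ne : v' i' ≠ u i' := fun h => hv'ine (by rw [h])
  set x : ∀ j : Fin d, Fin (n j) :=
    fun j => if j = i then v j else if j = i' then v' j else u j with hxdef
  have hxi : x i = v i := by simp [hxdef]
  have hxi' : x i' = v' i' := by simp [hxdef, hii'.symm]
  have hxo : ∀ j, j ≠ i → j ≠ i' → x j = u j := by
    intro j h1 h2; simp [hxdef, h1, h2]
  have hvi' : u i' = v i' := hi2 i' hii'.symm
  have hv'i : u i = v' i := hi'2 i hii'
  refine ⟨x, ⟨?_, ?_⟩, ?_⟩
  · -- x ≠ u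
    intro h
    exact huine' (by rw [← hxi, h])
  · -- N(u) ∩ N(x) = {v, v'}
    ext w
    simp only [Set.mem_inter_iff, SimpleGraph.mem_neighborSet, Set.mem_insert_iff,
      Set.mem_singleton_iff]
    constructor
    · rintro ⟨⟨k, hk1, hk2⟩, ⟨k', hk'1, hk'2⟩⟩
      by_cases hki : k = i
      · rw [hki] at hk2
        left
        have hwi' : w i' = u i' := (hk2 i' hii'.symm).symm
        have hk'i' : k' = i' := by
          by_contra hne'
          have h2 := hk'2 i' (Ne.symm hne')
          rw [hxi', hwi'] at h2
          exact huv'ne h2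
        rw [hk'i'] at hk'2
        funext j
        by_cases hji : j = i
        · subst hji
          exact ((hk'2 j hii').symm.trans hxi)
        · by_cases hji' : j = i'
          · subst hji'; rw [hwi', hvi']
          · rw [(hk2 j hji).symm, hi2 j hji]
      · by_cases hki' : k = i'
        · rw [hki'] at hk2
          right
          have hwi : w i = u i := (hk2 i hii').symm
          have hk'i : k' = i := by
            by_contra hne'
            have h2 := hk'2 i (Ne.symm hne')
            rw [hxi, hwi] at h2
            exact huine' h2
          rw [hk'i] at hk'2
          funext j
          by_cases hji' : j = i'
          · subst hji'
            exact ((hk'2 j hii'.symm).symm.trans hxi')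
          · by_cases hji : j = i
            · subst hji; rw [hwi, hv'i]
            · rw [(hk2 j hji').symm, hi'2 j hji']
        · exfalso
          have hwi : w i = u i := (hk2 i (fun h => hki h.symm)).symm
          have hwi' : w i' = u i' := (hk2 i' (fun h => hki' h.symm)).symm
          by_cases hk'i : k' = i
          · have h2 := hk'2 i' (by rw [hk'i]; exact hii'.symm)
            rw [hxi', hwi'] at h2
            exact huv'ne h2
          · have h2 := hk'2 i (Ne.symm hk'i)
            rw [hxi, hwi] at h2
            exact huine' h2
    · rintro (rfl | rfl)
      · exact ⟨hv, ⟨i', by rw [hxi', ← hvi', abs_sub_comm]; exact hi'1,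
          fun j hj => by
            by_cases hji : j = i
            · subst hji; exact hxi
            · rw [hxo j hji hj]; exact hi2 j hji⟩⟩
      · exact ⟨hv', ⟨i, by rw [hxi, ← hv'i, abs_sub_comm]; exact hi1,
          fun j hj => by
            by_cases hji' : j = i'
            · subst hji'; exact hxi'
            · rw [hxo j hj hji']; exact hi'2 j hji'⟩⟩
  · -- uniqueness
    rintro y ⟨hyu, hset⟩
    have hvmem : v ∈ (gridGraphD d n).neighborSet u ∩ (gridGraphD d n).neighborSet y := by
      rw [hset]; exact Set.mem_insert _ _
    have hv'mem : v' ∈ (gridGraphD d n).neighborSet u ∩ (gridGraphD d n).neighborSet y := by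
      rw [hset]; exact Set.mem_insert_of_mem _ rfl
    obtain ⟨k, hk1, hk2⟩ := hvmem.2
    obtain ⟨k', hk'1, hk'2⟩ := hv'mem.2
    -- v and v' differ at coordinates i and i'
    have hdiff_i : v i ≠ v' i := fun h => huine' (h.trans hv'i.symm)
    have hdiff_i' : v i' ≠ v' i' := fun h => huv'ne (h.symm.trans hvi'.symm)
    have hik : i = k ∨ i = k' := by
      by_contra h
      push_neg at h
      exact hdiff_i ((hk2 i h.1).symm.trans (hk'2 i h.2))
    have hi'k : i' = k ∨ i' = k' := by
      by_contra h
      push_neg at h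
      exact hdiff_i' ((hk2 i' h.1).symm.trans (hk'2 i' h.2))
    have hkk' : (k = i ∧ k' = i') ∨ (k = i' ∧ k' = i) := by
      rcases hik with h1 | h1 <;> rcases hi'k with h2 | h2
      · exact absurd (h1.trans h2.symm) hii'
      · exact Or.inl ⟨h1.symm, h2.symm⟩
      · exact Or.inr ⟨h2.symm, h1.symm⟩
      · exact absurd (h1.trans h2.symm) hii'
    rcases hkk' with ⟨h1, h2⟩ | ⟨h1, h2⟩
    · -- k = i, k' = i' : then y = u, contradiction
      rw [h1] at hk2
      rw [h2] at hk'2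
      exfalso
      apply hyu
      funext j
      by_cases hji : j = i
      · subst hji
        exact (hk'2 j hii').trans hv'i.symm
      · exact (hk2 j hji).trans (hi2 j hji).symm
    · -- k = i', k' = i : then y = x
      rw [h1] at hk2
      rw [h2] at hk'2
      funext j
      by_cases hji : j = i
      · subst hji
        exact (hk2 j hii').trans hxi.symm
      · by_cases hji' : j = i'
        · subst hji'
          exact (hk'2 j hii'.symm).trans hxi'.symm
        · exact (hk2 j hji').trans ((hi2 j hji).symm.trans ((hxo j hji hji').symm))
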